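/- Let 𝔠 be a complex subspace of E, let 𝔯 be a totally real subspace of E orthogonal to 𝔠, let T ∈ 𝔯, and let W ∈ E be orthogonal to 𝔠 ⊕ ℂ𝔯 (where ℂ𝔯 = 𝔯 + J𝔯). Then for all a, x ∈ ℝ, U ∈ 𝔠, S ∈ 𝔯 one has exp(ad(2JT+2W))(aB+U+S+xZ) = aB + U + S − a(JT+W) + (x − 2⟨S,T⟩)Z; consequently, exp(ad(2JT+2W))(ℝB ⊕ 𝔠 ⊕ 𝔯 ⊕ ℝZ) = ℝ(B − JT − W) ⊕ 𝔠 ⊕ 𝔯 ⊕ ℝZ. -/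

import Mathlib

open scoped RealInnerProductSpace

noncomputable section

namespace CHn

/-- `E n` is `ℂ^{n-1}`, viewed as a real inner product space with `⟪U,V⟫ = Re⟪U,V⟫_ℂ`
and complex structure `JU = iU`. -/
abbrev E (n : ℕ) := EuclideanSpace ℂ (Fin (n - 1))

/-- The solvable part `𝔰 = 𝔞 ⊕ 𝔫` of the Iwasawa decomposition of `𝔰𝔲(1,n)`, modeled as
`ℝB ⊕ E ⊕ ℝZ`; the element `(a, U, x)` represents `aB + U + xZ`. -/
abbrev S (n : ℕ) := ℝ × E n × ℝ

variable (n : ℕ)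

/-- The vector `B`. -/
def B : S n := (1, 0, 0)

/-- The vector `Z`. -/
def Z : S n := (0, 0, 1)

/-- The inner product of `𝔰` (`B`, `Z` unit, orthogonal direct sum `ℝB ⊕ E ⊕ ℝZ`). -/
def sInner (X Y : S n) : ℝ := X.1 * Y.1 + ⟪X.2.1, Y.2.1⟫ + X.2.2 * Y.2.2

/-- The ambient complex structure on `𝔰`: `J(aB + U + xZ) = -xB + JU + aZ`. -/
def Js : S n →ₗ[ℝ] S n where
  toFun X := (-X.2.2, Complex.I • X.2.1, X.1)
  map_add' X Y := by
    refine Prod.ext ?_ (Prod.ext ?_ ?_)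
    · simp; ring
    · simp [smul_add]
    · simp
  map_smul' c X := by
    refine Prod.ext ?_ (Prod.ext ?_ ?_)
    · simp only [Prod.smul_fst, Prod.smul_snd, smul_eq_mul, RingHom.id_apply]; ring
    · simp [Prod.smul_fst, Prod.smul_snd, smul_comm c Complex.I]
    · simp

/-- The Lie bracket of `𝔰`:
`[aB + U + xZ, bB + V + yZ] = (1/2)(aV - bU) + (ay - bx + ⟪JU, V⟫)Z`. -/
def bra (X Y : S n) : S n :=
  (0, (2⁻¹ : ℝ) • (X.1 • Y.2.1 - Y.1 • X.2.1),
    X.1 * Y.2.2 - Y.1 * X.2.2 + ⟪Complex.I • X.2.1, Y.2.1⟫)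

/-- `ad(X) = [X, ·]`, a (continuous) linear endomorphism of `𝔰`. -/
def ad (X : S n) : S n →L[ℝ] S n :=
  LinearMap.toContinuousLinearMap
    { toFun := bra n X
      map_add' := fun Y Y' => by
        unfold bra
        refine Prod.ext ?_ (Prod.ext ?_ ?_)
        · simp
        · simp only [Prod.fst_add, Prod.snd_add]
          module
        · simp only [Prod.fst_add, Prod.snd_add, inner_add_right]
          ring
      map_smul' := fun c Y => by
        unfold bra
        have h : ⟪Complex.I • X.2.1, c • Y.2.1⟫ = c * ⟪Complex.I • X.2.1, Y.2.1⟫ :=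
          real_inner_smul_right _ _ _
        refine Prod.ext ?_ (Prod.ext ?_ ?_)
        · simp
        · simp only [Prod.smul_fst, Prod.smul_snd, smul_eq_mul, RingHom.id_apply]
          module
        · simp only [Prod.smul_fst, Prod.smul_snd, smul_eq_mul, h, RingHom.id_apply]
          ring }

/-- `exp(ad(X)) = Σ_{k ≥ 0} ad(X)^k / k!`. -/
def expAd (X : S n) : S n →L[ℝ] S n := NormedSpace.exp (ad n X)

/-- `ρ(t) = (e^t - 1)/t` for `t ≠ 0`, `ρ(0) = 1`. -/
def rho (t : ℝ) : ℝ := if t = 0 then 1 else (Real.exp t - 1) / t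

/-- The Iwasawa group `AN`, modeled as `G = ℝ × E × ℝ`. -/
abbrev G (n : ℕ) := ℝ × E n × ℝ

/-- The product of `G`:
`(a,P,p)·(b,Q,q) = (a+b, P + e^{a/2}Q, p + e^a q + (1/2)e^{a/2}⟪JP,Q⟫)`. -/
def gmul (g h : G n) : G n :=
  (g.1 + h.1, g.2.1 + Real.exp (g.1 / 2) • h.2.1,
    g.2.2 + Real.exp g.1 * h.2.2 + 2⁻¹ * Real.exp (g.1 / 2) * ⟪Complex.I • g.2.1, h.2.1⟫)

/-- The Lie exponential `Exp : 𝔰 → G`, `Exp(cB + W + zZ) = (c, ρ(c/2)W, ρ(c)z)`. -/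
def Exp (X : S n) : G n := (X.1, rho (X.1 / 2) • X.2.1, rho X.1 * X.2.2)

/-- The inclusion of `E` into `𝔰`. -/
def inE : E n →ₗ[ℝ] S n where
  toFun U := (0, U, 0)
  map_add' U V := by refine Prod.ext ?_ (Prod.ext ?_ ?_) <;> simp
  map_smul' c U := by refine Prod.ext ?_ (Prod.ext ?_ ?_) <;> simp

/-- A real subspace of `E` is totally real if `⟪Ju, v⟫ = 0` for all its elements. -/
def TotallyRealE (V : Submodule ℝ (E n)) : Prop :=
  ∀ u ∈ V, ∀ v ∈ V, ⟪Complex.I • u, v⟫ = 0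

/-- A real subspace of `E` is complex if it is `J`-invariant. -/
def IsComplexE (V : Submodule ℝ (E n)) : Prop :=
  ∀ u ∈ V, Complex.I • u ∈ V

/-- The maximal complex subspace `V ∩ JV` of a real subspace `V` of `E`. -/
def maxCE (V : Submodule ℝ (E n)) : Set (E n) := {w | w ∈ V ∧ Complex.I • w ∈ V}

/-- `V` is a CR subspace of `E` if the orthogonal complement in `V` of its maximal
complex subspace `V ∩ JV` is totally real. -/
def IsCRE (V : Submodule ℝ (E n)) : Prop :=
  ∀ u ∈ V, ∀ v ∈ V, (∀ w ∈ maxCE n V, ⟪u, w⟫ = 0) →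
    (∀ w ∈ maxCE n V, ⟪v, w⟫ = 0) → ⟪Complex.I • u, v⟫ = 0

/-- A subset of `𝔰` is totally real if `⟪Ju, v⟫ = 0` for all its elements. -/
def TotallyRealS (V : Set (S n)) : Prop := ∀ u ∈ V, ∀ v ∈ V, sInner n (Js n u) v = 0

/-- The maximal complex subspace `V ∩ JV` of a real subspace `V` of `𝔰`. -/
def maxCS (V : Set (S n)) : Set (S n) := {x | x ∈ V ∧ Js n x ∈ V}

/-- `V` is a CR subspace of `𝔰` if the orthogonal complement in `V` of its maximal
complex subspace `V ∩ JV` is totally real. -/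
def IsCRS (V : Set (S n)) : Prop :=
  ∀ u ∈ V, ∀ v ∈ V, (∀ w ∈ maxCS n V, sInner n u w = 0) →
    (∀ w ∈ maxCS n V, sInner n v w = 0) → sInner n (Js n u) v = 0



section Aux

variable {n : ℕ}

lemma rinner_def (x y : E n) : ⟪x, y⟫ = Complex.re (inner ℂ x y) := by
  rw [PiLp.inner_apply, PiLp.inner_apply, Complex.re_sum]
  rfl

lemma rinner_I_left (x y : E n) : ⟪Complex.I • x, y⟫ = -⟪x, Complex.I • y⟫ := by
  rw [rinner_def, rinner_def, inner_smul_left, inner_smul_right]; simp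

lemma rinner_I_self (x : E n) : ⟪Complex.I • x, x⟫ = 0 := by
  rw [rinner_def, inner_smul_left]; simp [mul_comm, ← Complex.ofReal_pow, Complex.ofReal_im]

lemma ad_apply (X Y : S n) : ad n X Y = bra n X Y := rfl

lemma adP (P : E n) (Y : S n) :
    ad n ((0, P, 0) : S n) Y = (0, -((2⁻¹ * Y.1) • P), ⟪Complex.I • P, Y.2.1⟫) := by
  rw [ad_apply]
  unfold bra
  refine Prod.ext rfl (Prod.ext ?_ ?_)
  · show (2⁻¹ : ℝ) • ((0:ℝ) • Y.2.1 - Y.1 • P) = -((2⁻¹ * Y.1) • P)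
    module
  · show (0:ℝ) * Y.2.2 - Y.1 * 0 + ⟪Complex.I • P, Y.2.1⟫ = ⟪Complex.I • P, Y.2.1⟫
    ring

lemma ad_sq (P : E n) : ad n ((0, P, 0) : S n) * ad n ((0, P, 0) : S n) = 0 := by
  refine ContinuousLinearMap.ext fun Y => ?_
  show ad n ((0, P, 0) : S n) (ad n ((0, P, 0) : S n) Y) = 0
  rw [adP, adP]
  refine Prod.ext rfl (Prod.ext ?_ ?_)
  · show -((2⁻¹ * (0:ℝ)) • P) = 0
    simp
  · show ⟪Complex.I • P, -((2⁻¹ * Y.1) • P)⟫ = (0 : ℝ)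
    rw [inner_neg_right, real_inner_smul_right, rinner_I_self]
    simp

lemma exp_of_sq_zero {A : Type*} [NormedRing A] [NormedAlgebra ℝ A] [CompleteSpace A]
    (a : A) (h : a * a = 0) : NormedSpace.exp a = 1 + a := by
  rw [NormedSpace.exp_eq_tsum (𝕂 := ℝ)]
  show (∑' k : ℕ, ((k.factorial : ℝ))⁻¹ • a ^ k) = 1 + a
  rw [tsum_eq_sum (s := {0, 1}) (by
    intro k hk
    have h2 : 2 ≤ k := by simp at hk; omega
    have hz : a ^ k = 0 := by
      calc a ^ k = a ^ 2 * a ^ (k - 2) := by rw [← pow_add]; congr 1; omega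
        _ = 0 := by rw [pow_two, h, zero_mul]
    simp [hz])]
  simp [Finset.sum_pair (by norm_num : (0:ℕ) ≠ 1)]

lemma expAd_P (P : E n) :
    expAd n ((0, P, 0) : S n) = 1 + ad n ((0, P, 0) : S n) := by
  unfold expAd
  exact exp_of_sq_zero _ (ad_sq P)

lemma expAd_P_apply (P : E n) (Y : S n) :
    expAd n ((0, P, 0) : S n) Y
      = (Y.1, Y.2.1 - (2⁻¹ * Y.1) • P, Y.2.2 + ⟪Complex.I • P, Y.2.1⟫) := by
  rw [expAd_P, ContinuousLinearMap.add_apply, ContinuousLinearMap.one_apply, adP]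
  refine Prod.ext ?_ (Prod.ext ?_ ?_)
  · show Y.1 + 0 = Y.1; ring
  · show Y.2.1 + -((2⁻¹ * Y.1) • P) = Y.2.1 - (2⁻¹ * Y.1) • P
    abel
  · rfl

end Aux

/-- for `𝔠` complex, `𝔯` totally real orthogonal to `𝔠`, `T ∈ 𝔯`, `W ⟂ 𝔠 ⊕ ℂ𝔯`:
`exp(ad(2JT+2W))(aB+U+S+xZ) = aB + U + S − a(JT+W) + (x − 2⟨S,T⟩)Z` for `U ∈ 𝔠`, `S ∈ 𝔯`, and
`exp(ad(2JT+2W))(ℝB ⊕ 𝔠 ⊕ 𝔯 ⊕ ℝZ) = ℝ(B − JT − W) ⊕ 𝔠 ⊕ 𝔯 ⊕ ℝZ`. -/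
theorem statement12 (n : ℕ) (hn : 2 ≤ n) (𝔠 𝔯 : Submodule ℝ (E n))
    (h𝔠 : IsComplexE n 𝔠) (h𝔯 : TotallyRealE n 𝔯)
    (h𝔯𝔠 : ∀ u ∈ 𝔯, ∀ v ∈ 𝔠, ⟪u, v⟫ = 0)
    (T : E n) (hT : T ∈ 𝔯) (W : E n)
    (hW𝔠 : ∀ u ∈ 𝔠, ⟪W, u⟫ = 0)
    (hW𝔯 : ∀ u ∈ 𝔯, ⟪W, u⟫ = 0 ∧ ⟪W, Complex.I • u⟫ = 0) :
    (∀ a x : ℝ, ∀ U ∈ 𝔠, ∀ Sv ∈ 𝔯,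
      expAd n ((0, (2 : ℝ) • (Complex.I • T) + (2 : ℝ) • W, 0) : S n)
          ((a, U + Sv, x) : S n) =
        ((a, U + Sv - a • (Complex.I • T + W), x - 2 * ⟪Sv, T⟫) : S n)) ∧
    Submodule.map
        (expAd n ((0, (2 : ℝ) • (Complex.I • T) + (2 : ℝ) • W, 0) : S n)).toLinearMap
        (Submodule.span ℝ {B n} ⊔ Submodule.map (inE n) 𝔠 ⊔ Submodule.map (inE n) 𝔯 ⊔
          Submodule.span ℝ {Z n}) =
      Submodule.span ℝ {((1, -(Complex.I • T) - W, 0) : S n)} ⊔ Submodule.map (inE n) 𝔠 ⊔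
        Submodule.map (inE n) 𝔯 ⊔ Submodule.span ℝ {Z n} := by
  set P : E n := (2 : ℝ) • (Complex.I • T) + (2 : ℝ) • W with hP
  -- key inner product computations
  have hP𝔠 : ∀ U ∈ 𝔠, ⟪Complex.I • P, U⟫ = 0 := by
    intro U hU
    have h1 : Complex.I • P = (2 : ℝ) • (Complex.I • (Complex.I • T)) + (2 : ℝ) • (Complex.I • W) := by
      rw [hP, smul_add, smul_comm, smul_comm Complex.I ((2:ℝ)) W]
    rw [h1, inner_add_left, real_inner_smul_left, real_inner_smul_left]
    have h2 : Complex.I • Complex.I • T = -T := by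
      rw [smul_smul, Complex.I_mul_I, neg_one_smul]
    rw [h2, inner_neg_left, h𝔯𝔠 T hT U hU, rinner_I_left, hW𝔠 _ (h𝔠 U hU)]
    ring
  have hP𝔯 : ∀ Sv ∈ 𝔯, ⟪Complex.I • P, Sv⟫ = -(2 * ⟪Sv, T⟫) := by
    intro Sv hSv
    have h1 : Complex.I • P = (2 : ℝ) • (Complex.I • (Complex.I • T)) + (2 : ℝ) • (Complex.I • W) := by
      rw [hP, smul_add, smul_comm, smul_comm Complex.I ((2:ℝ)) W]
    rw [h1, inner_add_left, real_inner_smul_left, real_inner_smul_left]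
    have h2 : Complex.I • Complex.I • T = -T := by
      rw [smul_smul, Complex.I_mul_I, neg_one_smul]
    rw [h2, inner_neg_left, rinner_I_left, (hW𝔯 Sv hSv).2, real_inner_comm T Sv]
    ring
  -- first part
  have part1 : ∀ a x : ℝ, ∀ U ∈ 𝔠, ∀ Sv ∈ 𝔯,
      expAd n ((0, P, 0) : S n) ((a, U + Sv, x) : S n)
        = ((a, U + Sv - a • (Complex.I • T + W), x - 2 * ⟪Sv, T⟫) : S n) := by
    intro a x U hU Sv hSv
    rw [expAd_P_apply]
    refine Prod.ext rfl (Prod.ext ?_ ?_)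
    · show U + Sv - (2⁻¹ * a) • ((2 : ℝ) • (Complex.I • T) + (2 : ℝ) • W)
        = U + Sv - a • (Complex.I • T + W)
      module
    · show x + ⟪Complex.I • P, U + Sv⟫ = x - 2 * ⟪Sv, T⟫
      rw [inner_add_right, hP𝔠 U hU, hP𝔯 Sv hSv]
      ring
  refine ⟨part1, ?_⟩
  -- second part
  set f := expAd n ((0, P, 0) : S n) with hf
  have hfB : f (B n) = ((1, -(Complex.I • T) - W, 0) : S n) := by
    rw [hf, expAd_P_apply]
    refine Prod.ext rfl (Prod.ext ?_ ?_)
    · show (0 : E n) - (2⁻¹ * 1) • ((2 : ℝ) • (Complex.I • T) + (2 : ℝ) • W)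
        = -(Complex.I • T) - W
      module
    · show (0 : ℝ) + ⟪Complex.I • P, (0 : E n)⟫ = 0
      rw [inner_zero_right]; ring
  have hf𝔠 : ∀ U ∈ 𝔠, f ((0, U, 0) : S n) = ((0, U, 0) : S n) := by
    intro U hU
    rw [hf, expAd_P_apply]
    refine Prod.ext rfl (Prod.ext ?_ ?_)
    · show U - (2⁻¹ * (0:ℝ)) • P = U; simp
    · show (0:ℝ) + ⟪Complex.I • P, U⟫ = 0
      rw [hP𝔠 U hU]; ring
  have hf𝔯 : ∀ Sv ∈ 𝔯, f ((0, Sv, 0) : S n)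
      = ((0, Sv, 0) : S n) + (-(2 * ⟪Sv, T⟫)) • Z n := by
    intro Sv hSv
    rw [hf, expAd_P_apply]
    unfold Z
    refine Prod.ext ?_ (Prod.ext ?_ ?_)
    · show (0:ℝ) = 0 + -(2 * ⟪Sv, T⟫) * 0; ring
    · show Sv - (2⁻¹ * (0:ℝ)) • P = Sv + (-(2 * ⟪Sv, T⟫)) • (0 : E n)
      simp
    · show (0:ℝ) + ⟪Complex.I • P, Sv⟫ = 0 + -(2 * ⟪Sv, T⟫) * 1
      rw [hP𝔯 Sv hSv]; ring
  have hfZ : f (Z n) = Z n := by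
    rw [hf, expAd_P_apply]
    unfold Z
    refine Prod.ext rfl (Prod.ext ?_ ?_)
    · show (0 : E n) - (2⁻¹ * (0:ℝ)) • P = 0; simp
    · show (1:ℝ) + ⟪Complex.I • P, (0 : E n)⟫ = 1
      rw [inner_zero_right]; ring
  have hinE : ∀ U : E n, inE n U = ((0, U, 0) : S n) := fun _ => rfl
  have hflap : ∀ Y : S n, f.toLinearMap Y = f Y := fun _ => rfl
  -- memberships
  set v : S n := ((1, -(Complex.I • T) - W, 0) : S n) with hv
  set M := Submodule.span ℝ {B n} ⊔ Submodule.map (inE n) 𝔠 ⊔ Submodule.map (inE n) 𝔯 ⊔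
      Submodule.span ℝ {Z n} with hM
  set N := Submodule.span ℝ {v} ⊔ Submodule.map (inE n) 𝔠 ⊔ Submodule.map (inE n) 𝔯 ⊔
      Submodule.span ℝ {Z n} with hN
  have hBM : B n ∈ M := by
    rw [hM]
    exact Submodule.mem_sup_left (Submodule.mem_sup_left (Submodule.mem_sup_left
      (Submodule.subset_span rfl)))
  have hZM : Z n ∈ M := by
    rw [hM]; exact Submodule.mem_sup_right (Submodule.subset_span rfl)
  have h𝔠M : ∀ U ∈ 𝔠, ((0, U, 0) : S n) ∈ M := by
    intro U hU
    rw [hM]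
    exact Submodule.mem_sup_left (Submodule.mem_sup_left
      (Submodule.mem_sup_right ⟨U, hU, rfl⟩))
  have h𝔯M : ∀ Sv ∈ 𝔯, ((0, Sv, 0) : S n) ∈ M := by
    intro Sv hSv
    rw [hM]
    exact Submodule.mem_sup_left (Submodule.mem_sup_right ⟨Sv, hSv, rfl⟩)
  have hvN : v ∈ N := by
    rw [hN]
    exact Submodule.mem_sup_left (Submodule.mem_sup_left (Submodule.mem_sup_left
      (Submodule.subset_span rfl)))
  have hZN : Z n ∈ N := by
    rw [hN]; exact Submodule.mem_sup_right (Submodule.subset_span rfl)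
  have h𝔠N : ∀ U ∈ 𝔠, ((0, U, 0) : S n) ∈ N := by
    intro U hU
    rw [hN]
    exact Submodule.mem_sup_left (Submodule.mem_sup_left
      (Submodule.mem_sup_right ⟨U, hU, rfl⟩))
  have h𝔯N : ∀ Sv ∈ 𝔯, ((0, Sv, 0) : S n) ∈ N := by
    intro Sv hSv
    rw [hN]
    exact Submodule.mem_sup_left (Submodule.mem_sup_right ⟨Sv, hSv, rfl⟩)
  refine le_antisymm ?_ ?_
  · rw [Submodule.map_le_iff_le_comap, hM]
    refine sup_le (sup_le (sup_le ?_ ?_) ?_) ?_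
    · rw [Submodule.span_le]
      intro y hy
      rw [Set.mem_singleton_iff] at hy
      subst hy
      show f.toLinearMap (B n) ∈ N
      rw [hflap, hfB]
      exact hvN
    · rintro y ⟨U, hU, rfl⟩
      show f.toLinearMap (inE n U) ∈ N
      rw [hinE, hflap, hf𝔠 U hU]
      exact h𝔠N U hU
    · rintro y ⟨Sv, hSv, rfl⟩
      show f.toLinearMap (inE n Sv) ∈ N
      rw [hinE, hflap, hf𝔯 Sv hSv]
      exact N.add_mem (h𝔯N Sv hSv) (N.smul_mem _ hZN)
    · rw [Submodule.span_le]
      intro y hy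
      rw [Set.mem_singleton_iff] at hy
      subst hy
      show f.toLinearMap (Z n) ∈ N
      rw [hflap, hfZ]
      exact hZN
  · rw [hN]
    refine sup_le (sup_le (sup_le ?_ ?_) ?_) ?_
    · rw [Submodule.span_le]
      intro y hy
      rw [Set.mem_singleton_iff] at hy
      subst hy
      exact ⟨B n, hBM, by rw [hflap, hfB]⟩
    · rintro y ⟨U, hU, rfl⟩
      exact ⟨(0, U, 0), h𝔠M U hU, by rw [hinE, hflap, hf𝔠 U hU]⟩
    · rintro y ⟨Sv, hSv, rfl⟩
      refine ⟨((0, Sv, 0) : S n) + (2 * ⟪Sv, T⟫) • Z n,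
        M.add_mem (h𝔯M Sv hSv) (M.smul_mem _ hZM), ?_⟩
      rw [map_add, map_smul, hflap, hflap, hf𝔯 Sv hSv, hfZ, hinE]
      module
    · rw [Submodule.span_le]
      intro y hy
      rw [Set.mem_singleton_iff] at hy
      subst hy
      exact ⟨Z n, hZM, by rw [hflap, hfZ]⟩


end CHn
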